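/- arXiv:1411.5035 — 8 statements merged into one kernel-verified Lean document; each statement's English description precedes it below -/
import Mathlib

section
/- Stabilized commutator identity in a monoidal category (proof of Proposition 2.7): let 𝒞 be a monoidal category, X an object, and u, v : X ≅ X isomorphisms. Then in the group Aut((X ⊗ X) ⊗ X) of automorphisms of (X ⊗ X) ⊗ X one has the identity (⁅u,v⁆ ⊗ 𝟙_X) ⊗ 𝟙_X = ⁅(u ⊗ u⁻¹) ⊗ 𝟙_X, (v ⊗ 𝟙_X) ⊗ v⁻¹⁆, where ⁅a,b⁆ = a·b·a⁻¹·b⁻¹ denotes the commutator (with respect to composition of isomorphisms) and ⁅u,v⁆ is computed in Aut(X) with the same convention. -/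
open CategoryTheory MonoidalCategory
open scoped commutatorElement

/-- **Stabilized commutator identity in a monoidal category**: for `u, v : X ≅ X` one has
`(⁅u,v⁆ ⊗ 𝟙) ⊗ 𝟙 = ⁅(u ⊗ u⁻¹) ⊗ 𝟙, (v ⊗ 𝟙) ⊗ v⁻¹⁆` in the group `Aut ((X ⊗ X) ⊗ X)`,
where `⁅a,b⁆ = a·b·a⁻¹·b⁻¹` and the inverse `u⁻¹` in the group `Aut X` is `Iso.symm u`. -/
theorem stabilized_commutator {𝒞 : Type*} [Category 𝒞] [MonoidalCategory 𝒞]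
    (X : 𝒞) (u v : Aut X) (a b c : Aut ((X ⊗ X) ⊗ X))
    (ha : a = (u ⊗ᵢ Iso.symm u) ⊗ᵢ Iso.refl X)
    (hb : b = (v ⊗ᵢ Iso.refl X) ⊗ᵢ Iso.symm v)
    (hc : c = ((⁅u, v⁆ : Aut X) ⊗ᵢ Iso.refl X) ⊗ᵢ Iso.refl X) :
    c = ⁅a, b⁆ := by
  subst ha hb hc
  apply Iso.ext
  show ((v.inv ≫ u.inv ≫ v.hom ≫ u.hom) ⊗ₘ 𝟙 X) ⊗ₘ 𝟙 X =
    ((v.inv ⊗ₘ 𝟙 X) ⊗ₘ v.hom) ≫ ((u.inv ⊗ₘ u.hom) ⊗ₘ 𝟙 X) ≫ ((v.hom ⊗ₘ 𝟙 X) ⊗ₘ v.inv) ≫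
      ((u.hom ⊗ₘ u.inv) ⊗ₘ 𝟙 X)
  simp only [commutatorElement_def, Aut.Aut_mul_def, Aut.Aut_inv_def, Iso.trans_hom,
    Iso.symm_hom, tensorIso_hom, Iso.symm_inv, tensorIso_inv, Iso.refl_hom, Iso.refl_inv,
    tensorHom_comp_tensorHom, Category.comp_id, Category.id_comp, Iso.inv_hom_id, Iso.hom_inv_id,
    u.hom_inv_id, v.hom_inv_id]
end

section
/- Stably, commutators are commutators of commutators (essence of Proposition 2.7): let 𝒞 be a symmetric monoidal category, X an object, and u, v : X ≅ X isomorphisms. Then there exist automorphisms a, b ∈ Aut((X ⊗ X) ⊗ X), each of which is itself a commutator of elements of Aut((X ⊗ X) ⊗ X), such that (⁅u,v⁆ ⊗ 𝟙_X) ⊗ 𝟙_X = ⁅a,b⁆ in Aut((X ⊗ X) ⊗ X). -/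
open CategoryTheory MonoidalCategory
open scoped commutatorElement

section Aux
variable {𝒞 : Type*} [Category 𝒞] [MonoidalCategory 𝒞]

/-- Tensor product of automorphisms, typed at `Aut`. -/
private def tA {X Y : 𝒞} (f : Aut X) (g : Aut Y) : Aut (X ⊗ Y) := f ⊗ᵢ g

private lemma tA_mul {X Y : 𝒞} (f f' : Aut X) (g g' : Aut Y) :
    tA f g * tA f' g' = tA (f * f') (g * g') := by
  ext; show (f'.hom ⊗ₘ g'.hom) ≫ (f.hom ⊗ₘ g.hom) = (f'.hom ≫ f.hom) ⊗ₘ (g'.hom ≫ g.hom)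
  simp [tA, Aut.Aut_mul_def, tensorHom_comp_tensorHom, tensorIso_hom]

private lemma tA_inv {X Y : 𝒞} (f : Aut X) (g : Aut Y) :
    (tA f g)⁻¹ = tA f⁻¹ g⁻¹ := by
  ext; show f.inv ⊗ₘ g.inv = f.inv ⊗ₘ g.inv
  rfl

private lemma tA_comm {X Y : 𝒞} (f f' : Aut X) (g g' : Aut Y) :
    ⁅tA f g, tA f' g'⁆ = tA ⁅f, f'⁆ ⁅g, g'⁆ := by
  simp only [commutatorElement_def, tA_mul, tA_inv]

variable [SymmetricCategory 𝒞]

private def sw (X : 𝒞) : Aut ((X ⊗ X) ⊗ X) := tA (β_ X X : Aut (X ⊗ X)) 1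

private def cyc (X : 𝒞) : Aut ((X ⊗ X) ⊗ X) := α_ X X X ≪≫ β_ X (X ⊗ X)

private lemma sw_conj {X : 𝒞} (f g h : Aut X) :
    sw X * tA (tA f g) h * (sw X)⁻¹ = tA (tA g f) h := by
  ext
  show ((β_ X X).inv ⊗ₘ 𝟙 X) ≫ ((f.hom ⊗ₘ g.hom) ⊗ₘ h.hom) ≫ ((β_ X X).hom ⊗ₘ 𝟙 X)
      = (g.hom ⊗ₘ f.hom) ⊗ₘ h.hom
  rw [tensorHom_comp_tensorHom, tensorHom_comp_tensorHom]
  simp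

private lemma cyc_conj' {X : 𝒞} (f g h : Aut X) :
    cyc X * tA (tA f g) h = tA (tA g h) f * cyc X := by
  ext
  show ((f.hom ⊗ₘ g.hom) ⊗ₘ h.hom) ≫ ((α_ X X X).hom ≫ (β_ X (X ⊗ X)).hom)
      = ((α_ X X X).hom ≫ (β_ X (X ⊗ X)).hom) ≫ ((g.hom ⊗ₘ h.hom) ⊗ₘ f.hom)
  rw [← Category.assoc, associator_naturality, Category.assoc, Category.assoc,
    BraidedCategory.braiding_naturality]

private lemma cyc_conj {X : 𝒞} (f g h : Aut X) :
    cyc X * tA (tA f g) h * (cyc X)⁻¹ = tA (tA g h) f := by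
  rw [cyc_conj', mul_inv_cancel_right]

end Aux

/-- **Stably, commutators are commutators of commutators**: in a symmetric monoidal
category, for `u, v : X ≅ X` there are automorphisms `a, b` of `(X ⊗ X) ⊗ X`, each of
which is itself a commutator, with `(⁅u,v⁆ ⊗ 𝟙) ⊗ 𝟙 = ⁅a, b⁆`. -/
theorem commutator_of_commutators {𝒞 : Type*} [Category 𝒞] [MonoidalCategory 𝒞]
    [SymmetricCategory 𝒞] (X : 𝒞) (u v : Aut X) :
    ∃ a b : Aut ((X ⊗ X) ⊗ X),
      (∃ c d : Aut ((X ⊗ X) ⊗ X), a = ⁅c, d⁆) ∧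
      (∃ c d : Aut ((X ⊗ X) ⊗ X), b = ⁅c, d⁆) ∧
      (((⁅u, v⁆ : Aut X) ⊗ᵢ Iso.refl X) ⊗ᵢ Iso.refl X : Aut ((X ⊗ X) ⊗ X)) = ⁅a, b⁆ := by
  have ha : ⁅tA (tA u (1 : Aut X)) (1 : Aut X), sw X⁆ = tA (tA u u⁻¹) (1 : Aut X) := by
    rw [commutatorElement_def, tA_inv, tA_inv, inv_one,
      mul_assoc (tA (tA u (1 : Aut X)) (1 : Aut X)) (sw X), mul_assoc (tA (tA u (1 : Aut X)) (1 : Aut X)),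
      sw_conj, tA_mul, tA_mul, mul_one, mul_one, one_mul]
  have hb : ⁅tA (tA v (1 : Aut X)) (1 : Aut X), cyc X⁆ = tA (tA v (1 : Aut X)) v⁻¹ := by
    rw [commutatorElement_def, tA_inv, tA_inv, inv_one,
      mul_assoc (tA (tA v (1 : Aut X)) (1 : Aut X)) (cyc X), mul_assoc (tA (tA v (1 : Aut X)) (1 : Aut X)),
      cyc_conj, tA_mul, tA_mul, mul_one, mul_one, one_mul]
  refine ⟨tA (tA u u⁻¹) (1 : Aut X), tA (tA v (1 : Aut X)) v⁻¹,
    ⟨tA (tA u (1 : Aut X)) (1 : Aut X), sw X, ha.symm⟩, ⟨tA (tA v (1 : Aut X)) (1 : Aut X), cyc X, hb.symm⟩, ?_⟩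
  rw [tA_comm, tA_comm, commutatorElement_one_right, commutatorElement_one_left]
  rfl
end

section
/- Explicit rank-change isomorphism (equation (2to1_F)): let C be a Cantor algebra that is free on the single generator c. Then C is also free on the two generators λ(c) and ρ(c), where (λ(c), ρ(c)) = μ⁻¹(c) are the two components of the inverse of μ applied to c. -/
open CategoryTheory


/-- A Cantor algebra: a type with a bijection `μ : X × X ≃ X`. -/
structure CantorStr (X : Type) where
  mu : X × X ≃ X

/-- A homomorphism of Cantor algebras: a map commuting with the multiplications. -/
def IsCantorHom {C X : Type} (hC : CantorStr C) (hX : CantorStr X) (f : C → X) : Prop :=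
  ∀ x y : C, f (hC.mu (x, y)) = hX.mu (f x, f y)

/-- `C` is the free Cantor algebra on the generators `b : Fin r → C`. -/
def IsFreeCantorOn {C : Type} (hC : CantorStr C) {r : ℕ} (b : Fin r → C) : Prop :=
  ∀ (X : Type) (hX : CantorStr X) (x : Fin r → X),
    ∃! f : C → X, IsCantorHom hC hX f ∧ ∀ i, f (b i) = x i


/-- **Explicit rank-change isomorphism**: if `C` is free on the single generator `c`,
then `C` is also free on the two generators `λ(c)` and `ρ(c)`, the components of
`μ⁻¹(c)`. -/
theorem free_on_two_generators {C : Type} (hC : CantorStr C) (c : C)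
    (hfree : IsFreeCantorOn hC ![c]) :
    IsFreeCantorOn hC ![(hC.mu.symm c).1, (hC.mu.symm c).2] := by
  intro X hX x
  obtain ⟨f, ⟨hf, hfc⟩, huniq⟩ := hfree X hX ![hX.mu (x 0, x 1)]
  have hmu : hC.mu ((hC.mu.symm c).1, (hC.mu.symm c).2) = c := by
    rw [Prod.mk.eta, Equiv.apply_symm_apply]
  have key : hX.mu (f (hC.mu.symm c).1, f (hC.mu.symm c).2) = hX.mu (x 0, x 1) := by
    rw [← hf, hmu]
    exact hfc 0
  have hpair : f (hC.mu.symm c).1 = x 0 ∧ f (hC.mu.symm c).2 = x 1 := by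
    have := hX.mu.injective key
    exact ⟨congrArg Prod.fst this, congrArg Prod.snd this⟩
  refine ⟨f, ⟨hf, ?_⟩, ?_⟩
  · intro i
    fin_cases i
    · simpa using hpair.1
    · simpa using hpair.2
  · intro g ⟨hg, hgc⟩
    apply huniq
    refine ⟨hg, ?_⟩
    intro i
    fin_cases i
    have h0 := hgc 0
    have h1 := hgc 1
    simp only [Matrix.cons_val_zero, Matrix.cons_val_one, Matrix.head_cons] at h0 h1 ⊢
    rw [← hmu]
    simp only [Matrix.cons_val_fin_one]
    rw [hg, h0, h1]
end

section
/- All finitely generated free Cantor algebras of positive rank are isomorphic (equation (F_iso)): if r ≥ 1 and s ≥ 1, if C is a Cantor algebra free on r generators and D is a Cantor algebra free on s generators, then there exists an isomorphism of Cantor algebras C ≅ D, i.e. a bijection f : C ≃ D with f(μ(x,y)) = μ(f x, f y) for all x, y. -/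
open CategoryTheory


lemma hom_symm {C X : Type} {hC : CantorStr C} {hX : CantorStr X} {f : C → X}
    (hf : IsCantorHom hC hX f) (a : C) :
    hX.mu.symm (f a) = (f (hC.mu.symm a).1, f (hC.mu.symm a).2) := by
  rw [Equiv.symm_apply_eq, ← hf]
  congr 1
  rw [← Equiv.apply_symm_apply hC.mu a]
  simp

lemma hom_comp {C X Y : Type} {hC : CantorStr C} {hX : CantorStr X} {hY : CantorStr Y}
    {f : C → X} {g : X → Y} (hf : IsCantorHom hC hX f) (hg : IsCantorHom hX hY g) :
    IsCantorHom hC hY (g ∘ f) := by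
  intro x y
  simp only [Function.comp]
  rw [hf, hg]

lemma free_succ {C : Type} (hC : CantorStr C) {m : ℕ} (b : Fin (m + 1) → C)
    (hb : IsFreeCantorOn hC b) :
    ∃ c : Fin (m + 2) → C, IsFreeCantorOn hC c := by
  set l := (hC.mu.symm (b (Fin.last m))).1 with hl
  set rr := (hC.mu.symm (b (Fin.last m))).2 with hrr
  have hmulr : hC.mu (l, rr) = b (Fin.last m) := by
    rw [hl, hrr]
    exact hC.mu.apply_symm_apply _
  refine ⟨Fin.snoc (Fin.snoc (fun i : Fin m => b i.castSucc) l) rr, ?_⟩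
  intro X hX x
  set xl := x (Fin.castSucc (Fin.last m)) with hxl
  set xr := x (Fin.last (m + 1)) with hxr
  set x' : Fin (m + 1) → X :=
    Fin.snoc (fun i : Fin m => x i.castSucc.castSucc) (hX.mu (xl, xr)) with hx'
  obtain ⟨f, ⟨hf, hfb⟩, huniq⟩ := hb X hX x'
  have hflast : f (b (Fin.last m)) = hX.mu (xl, xr) := by
    have := hfb (Fin.last m)
    simpa [hx'] using this
  have hsym : hX.mu.symm (f (b (Fin.last m))) = (f l, f rr) := hom_symm hf _
  rw [hflast, Equiv.symm_apply_apply] at hsym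
  have hfl : f l = xl := (congrArg Prod.fst hsym).symm
  have hfr : f rr = xr := (congrArg Prod.snd hsym).symm
  refine ⟨f, ⟨hf, ?_⟩, ?_⟩
  · intro i
    refine Fin.lastCases ?_ (fun j => ?_) i
    · simpa using hfr
    · refine Fin.lastCases ?_ (fun k => ?_) j
      · simpa using hfl
      · have := hfb k.castSucc
        simpa [hx'] using this
  · rintro g ⟨hg, hgb⟩
    refine huniq g ⟨hg, ?_⟩
    intro j
    refine Fin.lastCases ?_ (fun k => ?_) j
    · have h1 := hgb (Fin.castSucc (Fin.last m))
      have h2 := hgb (Fin.last (m + 1))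
      simp at h1 h2
      rw [← hmulr, hg l rr, h1, h2]
      simp [hx', hxl, hxr]
    · have := hgb k.castSucc.castSucc
      simp at this
      simpa [hx'] using this

lemma free_ge {C : Type} (hC : CantorStr C) {r : ℕ} (hr : 1 ≤ r) (b : Fin r → C)
    (hb : IsFreeCantorOn hC b) :
    ∀ n, r ≤ n → ∃ c : Fin n → C, IsFreeCantorOn hC c := by
  intro n hn
  induction n, hn using Nat.le_induction with
  | base => exact ⟨b, hb⟩
  | succ n hn ih =>
    obtain ⟨c, hc⟩ := ih
    obtain ⟨m, rfl⟩ : ∃ m, n = m + 1 := ⟨n - 1, by omega⟩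
    exact free_succ hC c hc

lemma free_iso_same {C D : Type} (hC : CantorStr C) (hD : CantorStr D) {n : ℕ}
    (b : Fin n → C) (hb : IsFreeCantorOn hC b)
    (b' : Fin n → D) (hb' : IsFreeCantorOn hD b') :
    ∃ f : C ≃ D, ∀ x y : C, f (hC.mu (x, y)) = hD.mu (f x, f y) := by
  obtain ⟨f, ⟨hf, hfb⟩, _⟩ := hb D hD b'
  obtain ⟨g, ⟨hg, hgb⟩, _⟩ := hb' C hC b
  obtain ⟨h, _, hhuniq⟩ := hb C hC b
  have h1 : g ∘ f = id := by
    have e1 := hhuniq (g ∘ f) ⟨hom_comp hf hg, fun i => by simp [hfb, hgb]⟩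
    have e2 := hhuniq id ⟨fun x y => rfl, fun i => rfl⟩
    rw [e1, e2]
  obtain ⟨h', _, hh'uniq⟩ := hb' D hD b'
  have h2 : f ∘ g = id := by
    have e1 := hh'uniq (f ∘ g) ⟨hom_comp hg hf, fun i => by simp [hfb, hgb]⟩
    have e2 := hh'uniq id ⟨fun x y => rfl, fun i => rfl⟩
    rw [e1, e2]
  exact ⟨⟨f, g, fun x => congrFun h1 x, fun x => congrFun h2 x⟩, hf⟩

/-- **All finitely generated free Cantor algebras of positive rank are isomorphic**. -/
theorem free_cantor_iso {C D : Type} (hC : CantorStr C) (hD : CantorStr D) {r s : ℕ}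
    (hr : 1 ≤ r) (hs : 1 ≤ s) (b : Fin r → C) (hb : IsFreeCantorOn hC b)
    (b' : Fin s → D) (hb' : IsFreeCantorOn hD b') :
    ∃ f : C ≃ D, ∀ x y : C, f (hC.mu (x, y)) = hD.mu (f x, f y) := by
  obtain ⟨c, hc⟩ := free_ge hC hr b hb (max r s) (le_max_left r s)
  obtain ⟨d, hd⟩ := free_ge hD hs b' hb' (max r s) (le_max_right r s)
  exact free_iso_same hC hD c hc d hd
end

section
/- All Thompson groups V_r are isomorphic (equation (2to1_V)): if r ≥ 1 and s ≥ 1, if C is a Cantor algebra free on r generators and D is a Cantor algebra free on s generators, then the automorphism groups Aut(C) and Aut(D) are isomorphic as groups (there exists a group isomorphism, i.e. a MulEquiv, Aut(C) ≃* Aut(D)). -/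
open CategoryTheory


/-- The automorphism group of a Cantor algebra, as a subgroup of the permutation group. -/
def cantorAut {C : Type} (hC : CantorStr C) : Subgroup (Equiv.Perm C) where
  carrier := {f : Equiv.Perm C | IsCantorHom hC hC f}
  one_mem' := fun _ _ => rfl
  mul_mem' := by
    intro a b ha hb x y
    simp only [Equiv.Perm.coe_mul, Function.comp_apply, hb x y, ha (b x) (b y)]
  inv_mem' := by
    intro a ha x y
    apply a.injective
    have h : ∀ z, a (a⁻¹ z) = z := fun z => a.apply_symm_apply z
    rw [h, ha, h, h]


/-- Splitting a generator: a free Cantor algebra of rank `n+1` is free of rank `n+2`. -/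
lemma free_split {C : Type} (hC : CantorStr C) {n : ℕ} (b : Fin (n + 1) → C)
    (hb : IsFreeCantorOn hC b) : ∃ b2 : Fin (n + 2) → C, IsFreeCantorOn hC b2 := by
  set l := (hC.mu.symm (b 0)).1 with hl
  set p := (hC.mu.symm (b 0)).2 with hp
  have hlp : hC.mu (l, p) = b 0 := by
    rw [hl, hp]; exact hC.mu.apply_symm_apply (b 0)
  refine ⟨Fin.cons l (Fin.cons p (fun i => b i.succ)), ?_⟩
  intro X hX x
  obtain ⟨f, ⟨hf, hfb⟩, huniq⟩ :=
    hb X hX (Fin.cons (hX.mu (x 0, x 1)) (fun i => x i.succ.succ))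
  have key : (f l, f p) = (x 0, x 1) := by
    apply hX.mu.injective
    show hX.mu (f l, f p) = hX.mu (x 0, x 1)
    rw [← hf, hlp]
    simpa using hfb 0
  have kl : f l = x 0 := congrArg Prod.fst key
  have kp : f p = x 1 := congrArg Prod.snd key
  refine ⟨f, ⟨hf, ?_⟩, ?_⟩
  · intro j
    refine Fin.cases ?_ (fun i => ?_) j
    · simpa using kl
    · refine Fin.cases ?_ (fun i' => ?_) i
      · simpa using kp
      · have := hfb i'.succ
        simpa using this
  · rintro g ⟨hg, hgb⟩
    apply huniq
    refine ⟨hg, ?_⟩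
    intro i
    refine Fin.cases ?_ (fun i' => ?_) i
    · rw [← hlp, hg]
      have h0 : g l = x 0 := by simpa using hgb 0
      have h1 : g p = x 1 := by simpa using hgb 1
      simp [h0, h1]
    · have := hgb i'.succ.succ
      simpa using this

/-- A free Cantor algebra of positive rank is free of every larger rank. -/
lemma free_up {C : Type} (hC : CantorStr C) :
    ∀ (k n : ℕ), 1 ≤ n → (∃ b : Fin n → C, IsFreeCantorOn hC b) →
      ∃ b : Fin (n + k) → C, IsFreeCantorOn hC b := by
  intro k
  induction k with
  | zero => intro n _ h; exact h
  | succ k ih =>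
    intro n hn ⟨b, hb⟩
    obtain ⟨m, rfl⟩ : ∃ m, n = m + 1 := ⟨n - 1, by omega⟩
    have h2 := free_split hC b hb
    have : m + 1 + (k + 1) = (m + 2) + k := by omega
    rw [this]
    exact ih (m + 2) (by omega) h2

/-- Two free Cantor algebras of the same rank are isomorphic. -/
lemma free_iso {C D : Type} (hC : CantorStr C) (hD : CantorStr D) {t : ℕ}
    (b : Fin t → C) (hb : IsFreeCantorOn hC b) (b' : Fin t → D)
    (hb' : IsFreeCantorOn hD b') : ∃ e : C ≃ D, IsCantorHom hC hD e := by
  obtain ⟨f, ⟨hf, hfb⟩, _⟩ := hb D hD b'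
  obtain ⟨g, ⟨hg, hgb⟩, _⟩ := hb' C hC b
  have hgf : IsCantorHom hC hC (g ∘ f) := by
    intro x y
    show g (f _) = _
    rw [hf, hg]
    rfl
  have hfg : IsCantorHom hD hD (f ∘ g) := by
    intro x y
    show f (g _) = _
    rw [hg, hf]
    rfl
  obtain ⟨u, _, huC⟩ := hb C hC b
  obtain ⟨v, _, hvD⟩ := hb' D hD b'
  have h1 : g ∘ f = id := by
    rw [huC (g ∘ f) ⟨hgf, fun i => by simp [hfb, hgb]⟩,
      huC id ⟨fun _ _ => rfl, fun _ => rfl⟩]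
  have h2 : f ∘ g = id := by
    rw [hvD (f ∘ g) ⟨hfg, fun i => by simp [hfb, hgb]⟩,
      hvD id ⟨fun _ _ => rfl, fun _ => rfl⟩]
  exact ⟨⟨f, g, fun x => congrFun h1 x, fun x => congrFun h2 x⟩, hf⟩

/-- A Cantor isomorphism induces a group isomorphism of automorphism groups. -/
lemma aut_iso {C D : Type} (hC : CantorStr C) (hD : CantorStr D) (e : C ≃ D)
    (he : IsCantorHom hC hD e) : Nonempty (↥(cantorAut hC) ≃* ↥(cantorAut hD)) := by
  have he' : IsCantorHom hD hC e.symm := by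
    intro x y
    apply e.injective
    rw [he, e.apply_symm_apply, e.apply_symm_apply, e.apply_symm_apply]
  have mem : ∀ a : Equiv.Perm C, a ∈ cantorAut hC → e.permCongr a ∈ cantorAut hD := by
    intro a ha x y
    simp only [Equiv.permCongr_apply]
    rw [he' x y, ha, he]
  have mem' : ∀ a : Equiv.Perm D, a ∈ cantorAut hD → e.symm.permCongr a ∈ cantorAut hC := by
    intro a ha x y
    simp only [Equiv.permCongr_apply, Equiv.symm_symm]
    rw [he x y, ha, he']
  refine ⟨{
    toFun := fun a => ⟨e.permCongr a.1, mem a.1 a.2⟩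
    invFun := fun a => ⟨e.symm.permCongr a.1, mem' a.1 a.2⟩
    left_inv := fun a => by
      ext x
      simp
    right_inv := fun a => by
      ext x
      simp
    map_mul' := fun a c => by
      ext x
      simp }⟩

/-- **All Thompson groups `V_r` are isomorphic**: the automorphism groups of free Cantor
algebras of positive ranks are isomorphic as groups. -/
theorem thompson_groups_iso {C D : Type} (hC : CantorStr C) (hD : CantorStr D) {r s : ℕ}
    (hr : 1 ≤ r) (hs : 1 ≤ s) (b : Fin r → C) (hb : IsFreeCantorOn hC b)
    (b' : Fin s → D) (hb' : IsFreeCantorOn hD b') :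
    Nonempty (↥(cantorAut hC) ≃* ↥(cantorAut hD)) := by
  obtain ⟨c, hc⟩ := free_up hC s r hr ⟨b, hb⟩
  obtain ⟨d, hd⟩ := free_up hD r s hs ⟨b', hb'⟩
  have hd2 : IsFreeCantorOn hD (d ∘ Fin.cast (Nat.add_comm r s)) := by
    intro X hX x
    obtain ⟨f, hf, hu⟩ := hd X hX (x ∘ Fin.cast (Nat.add_comm s r))
    refine ⟨f, ⟨hf.1, fun i => hf.2 (Fin.cast (Nat.add_comm r s) i)⟩, ?_⟩
    rintro g ⟨hg1, hg2⟩
    exact hu g ⟨hg1, fun i => hg2 (Fin.cast (Nat.add_comm s r) i)⟩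
  obtain ⟨e, he⟩ := free_iso hC hD c hc _ hd2
  exact aut_iso hC hD e he
end

section
/- Rank relation for free Cantor_n algebras (used for equation (n_product_iso) and Theorem 1.4): let n ≥ 2 and let C be a Cantor_n algebra that is free on the single generator c. Then C is also free on the n generators given by the components of μ⁻¹(c), i.e. on the family (μ⁻¹ c) : Fin n → C. -/
open CategoryTheory


/-- A Cantor_n algebra: a type with a bijection `μ : (Fin n → X) ≃ X`. -/
structure CantorNStr (n : ℕ) (X : Type) where
  mu : (Fin n → X) ≃ X

/-- A homomorphism of Cantor_n algebras. -/
def IsCantorNHom {n : ℕ} {C X : Type} (hC : CantorNStr n C) (hX : CantorNStr n X)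
    (f : C → X) : Prop :=
  ∀ x : Fin n → C, f (hC.mu x) = hX.mu (f ∘ x)

/-- `C` is the free Cantor_n algebra on the generators `b : Fin r → C`. -/
def IsFreeCantorNOn {n : ℕ} {C : Type} (hC : CantorNStr n C) {r : ℕ} (b : Fin r → C) : Prop :=
  ∀ (X : Type) (hX : CantorNStr n X) (x : Fin r → X),
    ∃! f : C → X, IsCantorNHom hC hX f ∧ ∀ i, f (b i) = x i

/-- **Rank relation for free Cantor_n algebras**: for `n ≥ 2`, if `C` is free on the
single generator `c`, then `C` is also free on the `n` generators given by the components
of `μ⁻¹(c)`. -/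
theorem free_on_n_generators {n : ℕ} (hn : 2 ≤ n) {C : Type} (hC : CantorNStr n C)
    (c : C) (hfree : IsFreeCantorNOn hC ![c]) :
    IsFreeCantorNOn hC (hC.mu.symm c) := by
  intro X hX x
  obtain ⟨f, ⟨hfhom, hfc⟩, hfuniq⟩ := hfree X hX ![hX.mu x]
  have hfc' : f c = hX.mu x := hfc 0
  have key : ∀ i, f (hC.mu.symm c i) = x i := by
    have : f c = hX.mu (f ∘ hC.mu.symm c) := by
      conv_lhs => rw [← hC.mu.apply_symm_apply c]
      exact hfhom _
    have h2 : f ∘ hC.mu.symm c = x := hX.mu.injective (by rw [← this, hfc'])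
    exact fun i => congrFun h2 i
  refine ⟨f, ⟨hfhom, key⟩, ?_⟩
  intro g ⟨hghom, hgc⟩
  apply hfuniq
  refine ⟨hghom, ?_⟩
  intro i
  fin_cases i
  show g c = hX.mu x
  have : g c = hX.mu (g ∘ hC.mu.symm c) := by
    conv_lhs => rw [← hC.mu.apply_symm_apply c]
    exact hghom _
  rw [this]
  congr 1
  funext i
  exact hgc i
end

section
/- Finite families of clones can be refined to pairwise disjoint clones (proof of Proposition 5.4): let C be a Cantor algebra free on one generator and let X₁,…,X_k be finitely many clones of C. Then there exist clones X'₁,…,X'_k of C with X'_j ⊆ X_j for all j, such that the X'_j are pairwise disjoint (X'_i ∩ X'_j = ∅ for i ≠ j) and moreover the subalgebra generated by X'₁ ∪ ⋯ ∪ X'_k is a proper subset of C. -/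
open CategoryTheory


/-- A subalgebra: a subset closed under `μ`, `λ` and `ρ`. -/
def IsCantorSubalgebra {C : Type} (hC : CantorStr C) (S : Set C) : Prop :=
  (∀ x ∈ S, ∀ y ∈ S, hC.mu (x, y) ∈ S) ∧
    ∀ x ∈ S, (hC.mu.symm x).1 ∈ S ∧ (hC.mu.symm x).2 ∈ S

/-- The subalgebra generated by a subset: the smallest subalgebra containing it. -/
def genCantorSubalgebra {C : Type} (hC : CantorStr C) (A : Set C) : Set C :=
  ⋂₀ {S : Set C | IsCantorSubalgebra hC S ∧ A ⊆ S}

/-- A clone: a nonempty, proper, finitely generated subalgebra. -/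
def IsClone {C : Type} (hC : CantorStr C) (X : Set C) : Prop :=
  IsCantorSubalgebra hC X ∧ X.Nonempty ∧ X ≠ Set.univ ∧
    ∃ F : Set C, F.Finite ∧ X = genCantorSubalgebra hC F




namespace RefineAux

/-! ### Sequences -/

abbrev Seq := ℕ → Bool
abbrev FF := Seq → Seq

def scons (b : Bool) (s : Seq) : Seq := fun n =>
  match n with
  | 0 => b
  | Nat.succ m => s m

def stail (s : Seq) : Seq := fun m => s (m + 1)

def sapp (l : List Bool) (s : Seq) : Seq := l.foldr scons s

def sdrop (n : ℕ) (s : Seq) : Seq := fun m => s (m + n)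

@[simp] lemma sapp_nil (s : Seq) : sapp [] s = s := rfl
@[simp] lemma sapp_cons (b : Bool) (l : List Bool) (s : Seq) :
    sapp (b :: l) s = scons b (sapp l s) := rfl

lemma sapp_append (l₁ l₂ : List Bool) (s : Seq) :
    sapp (l₁ ++ l₂) s = sapp l₁ (sapp l₂ s) := by
  simp [sapp, List.foldr_append]

lemma sapp_snoc (l : List Bool) (b : Bool) (s : Seq) :
    sapp (l ++ [b]) s = sapp l (scons b s) := by
  rw [sapp_append]; rfl

@[simp] lemma scons_zero (b : Bool) (s : Seq) : scons b s 0 = b := rfl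
@[simp] lemma scons_succ (b : Bool) (s : Seq) (m : ℕ) : scons b s (m + 1) = s m := rfl
@[simp] lemma stail_scons (b : Bool) (s : Seq) : stail (scons b s) = s := rfl

lemma scons_head_tail (s : Seq) : scons (s 0) (stail s) = s := by
  funext m; cases m <;> rfl

@[simp] lemma sdrop_zero (s : Seq) : sdrop 0 s = s := rfl

lemma sdrop_stail (n : ℕ) (s : Seq) : sdrop n (stail s) = sdrop (n + 1) s := by
  funext m; simp [sdrop, stail]; ring_nf

lemma sdrop_succ_scons (n : ℕ) (b : Bool) (s : Seq) :
    sdrop (n + 1) (scons b s) = sdrop n s := by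
  funext m; show scons b s (m + (n+1)) = s (m + n)
  have : m + (n + 1) = (m + n) + 1 := rfl
  rw [this]; rfl

lemma sapp_lt (l : List Bool) (s : Seq) (m : ℕ) (h : m < l.length) :
    sapp l s m = l[m] := by
  induction l generalizing m with
  | nil => simp at h
  | cons b l ih =>
    cases m with
    | zero => rfl
    | succ m =>
      simp only [sapp_cons, scons_succ]
      rw [ih m (by simpa using h)]
      simp

/-! ### The model Cantor algebra -/

def Fmu : FF × FF ≃ FF where
  toFun p := fun s => (if s 0 then p.2 else p.1) (stail s)
  invFun h := (fun s => h (scons false s), fun s => h (scons true s))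
  left_inv p := by
    refine Prod.ext ?_ ?_ <;> funext s
    · show (if scons false s 0 = true then p.2 else p.1) (stail (scons false s)) = p.1 s
      simp
    · show (if scons true s 0 = true then p.2 else p.1) (stail (scons true s)) = p.2 s
      simp
  right_inv h := by
    funext s
    show (if s 0 = true then (fun t => h (scons true t)) else (fun t => h (scons false t)))
      (stail s) = h s
    cases hs : s 0 with
    | false =>
      rw [if_neg (by simp)]
      show h (scons false (stail s)) = h s
      rw [show scons false (stail s) = s by rw [← hs]; exact scons_head_tail s]
    | true =>
      rw [if_pos rfl]
      show h (scons true (stail s)) = h s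
      rw [show scons true (stail s) = s by rw [← hs]; exact scons_head_tail s]

def FC : CantorStr FF := ⟨Fmu⟩

lemma FC_mu_apply (h₁ h₂ : FF) (b : Bool) (t : Seq) :
    FC.mu (h₁, h₂) (scons b t) = (if b then h₂ else h₁) t := rfl

/-! ### λ, ρ and word application -/

variable {C X Y : Type}

def lamc (hX : CantorStr X) (x : X) : X := (hX.mu.symm x).1
def rhoc (hX : CantorStr X) (x : X) : X := (hX.mu.symm x).2

def aw (hX : CantorStr X) : List Bool → X → X
  | [], x => x
  | b :: l, x => aw hX l (if b then rhoc hX x else lamc hX x)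

lemma lamc_F (h : FF) : lamc FC h = fun s => h (scons false s) := rfl
lemma rhoc_F (h : FF) : rhoc FC h = fun s => h (scons true s) := rfl

lemma aw_F (l : List Bool) (h : FF) : aw FC l h = fun s => h (sapp l s) := by
  induction l generalizing h with
  | nil => rfl
  | cons b l ih =>
    show aw FC l (if b then rhoc FC h else lamc FC h) = _
    rw [ih]
    cases b <;> · funext s; rfl

lemma mem_lamc {hX : CantorStr X} {S : Set X} (hS : IsCantorSubalgebra hX S)
    {x : X} (hx : x ∈ S) : lamc hX x ∈ S := (hS.2 x hx).1

lemma mem_rhoc {hX : CantorStr X} {S : Set X} (hS : IsCantorSubalgebra hX S)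
    {x : X} (hx : x ∈ S) : rhoc hX x ∈ S := (hS.2 x hx).2

lemma mem_aw {hX : CantorStr X} {S : Set X} (hS : IsCantorSubalgebra hX S)
    {x : X} (hx : x ∈ S) (l : List Bool) : aw hX l x ∈ S := by
  induction l generalizing x with
  | nil => exact hx
  | cons b l ih =>
    show aw hX l _ ∈ S
    exact ih (by cases b <;> simp [mem_lamc hS hx, mem_rhoc hS hx])

lemma hom_musymm {hC : CantorStr C} {hX : CantorStr X} {f : C → X}
    (hf : IsCantorHom hC hX f) (x : C) :
    hX.mu.symm (f x) = (f (lamc hC x), f (rhoc hC x)) := by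
  have h2 : hC.mu (lamc hC x, rhoc hC x) = x := by
    show hC.mu ((hC.mu.symm x).1, (hC.mu.symm x).2) = x
    rw [Prod.mk.eta, Equiv.apply_symm_apply]
  have h1 := hf (lamc hC x) (rhoc hC x)
  rw [h2] at h1
  rw [h1, Equiv.symm_apply_apply]

lemma hom_lamc {hC : CantorStr C} {hX : CantorStr X} {f : C → X}
    (hf : IsCantorHom hC hX f) (x : C) : f (lamc hC x) = lamc hX (f x) := by
  show f (lamc hC x) = (hX.mu.symm (f x)).1
  rw [hom_musymm hf x]

lemma hom_rhoc {hC : CantorStr C} {hX : CantorStr X} {f : C → X}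
    (hf : IsCantorHom hC hX f) (x : C) : f (rhoc hC x) = rhoc hX (f x) := by
  show f (rhoc hC x) = (hX.mu.symm (f x)).2
  rw [hom_musymm hf x]

lemma hom_aw {hC : CantorStr C} {hX : CantorStr X} {f : C → X}
    (hf : IsCantorHom hC hX f) (l : List Bool) (x : C) :
    f (aw hC l x) = aw hX l (f x) := by
  induction l generalizing x with
  | nil => rfl
  | cons b l ih =>
    show f (aw hC l _) = aw hX l _
    rw [ih]
    cases b <;> simp [hom_lamc hf, hom_rhoc hf]

/-! ### Generated subalgebras -/

lemma univ_subalg (hX : CantorStr X) : IsCantorSubalgebra hX (Set.univ : Set X) :=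
  ⟨fun _ _ _ _ => trivial, fun _ _ => ⟨trivial, trivial⟩⟩

lemma gen_subalg (hX : CantorStr X) (A : Set X) :
    IsCantorSubalgebra hX (genCantorSubalgebra hX A) := by
  constructor
  · intro x hx y hy S hS
    exact hS.1.1 x (hx S hS) y (hy S hS)
  · intro x hx
    exact ⟨fun S hS => (hS.1.2 x (hx S hS)).1, fun S hS => (hS.1.2 x (hx S hS)).2⟩

lemma subset_gen (hX : CantorStr X) (A : Set X) : A ⊆ genCantorSubalgebra hX A :=
  fun x hx S hS => hS.2 hx

lemma gen_least (hX : CantorStr X) {A S : Set X} (h1 : IsCantorSubalgebra hX S)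
    (h2 : A ⊆ S) : genCantorSubalgebra hX A ⊆ S :=
  fun x hx => hx S ⟨h1, h2⟩

lemma preimage_subalg {hC : CantorStr C} {hX : CantorStr X} {f : C → X}
    (hf : IsCantorHom hC hX f) {S : Set X} (hS : IsCantorSubalgebra hX S) :
    IsCantorSubalgebra hC (f ⁻¹' S) := by
  constructor
  · intro x hx y hy
    show f (hC.mu (x, y)) ∈ S
    rw [hf x y]; exact hS.1 _ hx _ hy
  · intro x hx
    constructor
    · show f (lamc hC x) ∈ S
      rw [hom_lamc hf]; exact (hS.2 _ hx).1
    · show f (rhoc hC x) ∈ S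
      rw [hom_rhoc hf]; exact (hS.2 _ hx).2

/-! ### The free algebra is generated by its generator -/

lemma gen_singleton_univ (hC : CantorStr C) (c : C) (hfree : IsFreeCantorOn hC ![c]) :
    genCantorSubalgebra hC {c} = Set.univ := by
  set G := genCantorSubalgebra hC {c} with hGdef
  have hG : IsCantorSubalgebra hC G := gen_subalg hC {c}
  have hcG : c ∈ G := subset_gen hC {c} rfl
  -- Cantor structure on the subtype
  let muG : (↥G × ↥G) ≃ ↥G :=
    { toFun := fun p => ⟨hC.mu (p.1.1, p.2.1), hG.1 _ p.1.2 _ p.2.2⟩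
      invFun := fun z => (⟨(hC.mu.symm z.1).1, (hG.2 z.1 z.2).1⟩,
        ⟨(hC.mu.symm z.1).2, (hG.2 z.1 z.2).2⟩)
      left_inv := fun p => by
        have : hC.mu.symm (hC.mu (p.1.1, p.2.1)) = (p.1.1, p.2.1) := Equiv.symm_apply_apply _ _
        ext
        · show (hC.mu.symm (hC.mu (p.1.1, p.2.1))).1 = p.1.1; rw [this]
        · show (hC.mu.symm (hC.mu (p.1.1, p.2.1))).2 = p.2.1; rw [this]
      right_inv := fun z => by
        apply Subtype.ext
        show hC.mu ((hC.mu.symm z.1).1, (hC.mu.symm z.1).2) = z.1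
        rw [Prod.mk.eta, Equiv.apply_symm_apply] }
  let hGC : CantorStr ↥G := ⟨muG⟩
  obtain ⟨h, ⟨hhom, hgen⟩, -⟩ := hfree ↥G hGC ![⟨c, hcG⟩]
  have hφhom : IsCantorHom hC hC (fun z => (h z).1) := by
    intro x y
    show (h (hC.mu (x, y))).1 = _
    rw [hhom x y]
    rfl
  have hφc : (fun z => (h z).1) c = c := by
    have := hgen 0
    simp only [Matrix.cons_val_zero] at this
    show ((h c : ↥G) : C) = c
    rw [this]
  obtain ⟨f₀, -, huniq⟩ := hfree C hC ![c]
  have h1 : (fun z => (h z).1) = f₀ := huniq _ ⟨hφhom, by intro i; fin_cases i; simpa using hφc⟩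
  have h2 : (id : C → C) = f₀ := huniq _ ⟨fun x y => rfl, by intro i; fin_cases i; rfl⟩
  have : ∀ z : C, z = (h z).1 := by
    intro z
    have := congrFun (h1.trans h2.symm) z
    exact this.symm
  ext z
  simp only [Set.mem_univ, iff_true]
  rw [this z]
  exact (h z).2



/-! ### The set of "uniform shift" maps -/

def GoodSpec (h : FF) (N : ℕ) : Prop :=
  ∀ V : List Bool, V.length = N → ∃ u n, n ≤ N ∧
    ∀ s, h (sapp V s) = sapp u (sapp (V.drop n) s)

def Good : Set FF := {h | ∃ N, GoodSpec h N}

lemma goodSpec_mono {h : FF} {N N' : ℕ} (hle : N ≤ N') (hN : GoodSpec h N) :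
    GoodSpec h N' := by
  intro V hV
  obtain ⟨u, n, hn, hs⟩ := hN (V.take N) (by rw [List.length_take]; omega)
  have hn' : n ≤ (V.take N).length := by rw [List.length_take]; omega
  refine ⟨u, n, le_trans hn hle, fun s => ?_⟩
  have hdec : V = V.take N ++ V.drop N := (List.take_append_drop N V).symm
  have hlist : V.drop n = (V.take N).drop n ++ V.drop N := by
    conv_lhs => rw [hdec]
    exact List.drop_append_of_le_length hn'
  calc h (sapp V s) = h (sapp (V.take N) (sapp (V.drop N) s)) := by
        rw [← sapp_append, ← hdec]
    _ = sapp u (sapp ((V.take N).drop n) (sapp (V.drop N) s)) := hs _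
    _ = sapp u (sapp ((V.take N).drop n ++ V.drop N) s) := by rw [sapp_append]
    _ = sapp u (sapp (V.drop n) s) := by rw [hlist]

lemma id_mem_good : (id : FF) ∈ Good := by
  refine ⟨0, fun V hV => ?_⟩
  rw [List.length_eq_zero_iff] at hV; subst hV
  exact ⟨[], 0, le_refl _, fun s => rfl⟩

lemma scons_mem_good {h : FF} (hh : h ∈ Good) (b : Bool) :
    (fun s => h (scons b s)) ∈ Good := by
  obtain ⟨N, hN⟩ := hh
  refine ⟨N, fun V hV => ?_⟩
  obtain ⟨u, n, hn, hs⟩ := goodSpec_mono (Nat.le_succ N) hN (b :: V) (by simp [hV])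
  cases n with
  | zero =>
    refine ⟨u ++ [b], 0, Nat.zero_le _, fun s => ?_⟩
    show h (scons b (sapp V s)) = sapp (u ++ [b]) (sapp (V.drop 0) s)
    rw [List.drop_zero, sapp_snoc]
    have := hs s
    rw [List.drop_zero] at this
    exact this
  | succ m =>
    refine ⟨u, m, by omega, fun s => ?_⟩
    show h (scons b (sapp V s)) = sapp u (sapp (V.drop m) s)
    have := hs s
    rw [show (b :: V).drop (m + 1) = V.drop m from rfl] at this
    exact this

lemma good_subalg : IsCantorSubalgebra FC Good := by
  constructor
  · rintro h₁ ⟨N₁, hN₁⟩ h₂ ⟨N₂, hN₂⟩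
    refine ⟨max N₁ N₂ + 1, ?_⟩
    intro V hV
    match V, hV with
    | b :: V', hV =>
      have hV' : V'.length = max N₁ N₂ := by simpa using hV
      cases b
      · obtain ⟨u, n, hn, hs⟩ := goodSpec_mono (le_max_left _ _) hN₁ V' hV'
        refine ⟨u, n + 1, by omega, fun s => ?_⟩
        show FC.mu (h₁, h₂) (scons false (sapp V' s)) = _
        rw [FC_mu_apply]
        rw [if_neg (by simp)]
        exact hs s
      · obtain ⟨u, n, hn, hs⟩ := goodSpec_mono (le_max_right _ _) hN₂ V' hV'
        refine ⟨u, n + 1, by omega, fun s => ?_⟩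
        show FC.mu (h₁, h₂) (scons true (sapp V' s)) = _
        rw [FC_mu_apply]
        rw [if_pos rfl]
        exact hs s
  · intro h hh
    exact ⟨scons_mem_good hh false, scons_mem_good hh true⟩

/-! ### Shift sets with prescribed prefixes -/

def SU (Ws : Set (List Bool)) : Set FF :=
  {h | ∀ s, ∃ W ∈ Ws, ∃ u n, h s = sapp (W ++ u) (sdrop n s)}

lemma SU_mono {Ws Ws' : Set (List Bool)} (hsub : Ws ⊆ Ws') : SU Ws ⊆ SU Ws' := by
  intro h hh s
  obtain ⟨W, hW, u, n, he⟩ := hh s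
  exact ⟨W, hsub hW, u, n, he⟩

lemma scons_mem_SU {Ws : Set (List Bool)} {h : FF} (hh : h ∈ SU Ws) (b : Bool) :
    (fun s => h (scons b s)) ∈ SU Ws := by
  intro s
  obtain ⟨W, hW, u, n, he⟩ := hh (scons b s)
  cases n with
  | zero =>
    refine ⟨W, hW, u ++ [b], 0, ?_⟩
    show h (scons b s) = sapp (W ++ (u ++ [b])) (sdrop 0 s)
    rw [he, sdrop_zero, sdrop_zero, ← List.append_assoc, sapp_snoc]
  | succ m =>
    refine ⟨W, hW, u, m, ?_⟩
    show h (scons b s) = sapp (W ++ u) (sdrop m s)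
    rw [he, sdrop_succ_scons]

lemma SU_subalg (Ws : Set (List Bool)) : IsCantorSubalgebra FC (SU Ws) := by
  constructor
  · intro h₁ hh₁ h₂ hh₂ s
    show ∃ W ∈ Ws, ∃ u n, (if s 0 = true then h₂ else h₁) (stail s) = sapp (W ++ u) (sdrop n s)
    cases hs : s 0 with
    | false =>
      obtain ⟨W, hW, u, n, he⟩ := hh₁ (stail s)
      refine ⟨W, hW, u, n + 1, ?_⟩
      rw [if_neg (by simp), he, sdrop_stail]
    | true =>
      obtain ⟨W, hW, u, n, he⟩ := hh₂ (stail s)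
      refine ⟨W, hW, u, n + 1, ?_⟩
      rw [if_pos rfl, he, sdrop_stail]
  · intro h hh
    exact ⟨scons_mem_SU hh false, scons_mem_SU hh true⟩

lemma sapp_mem_SU {Ws : Set (List Bool)} {W : List Bool} (hW : W ∈ Ws) :
    (fun s => sapp W s) ∈ SU Ws := by
  intro s
  refine ⟨W, hW, [], 0, ?_⟩
  rw [List.append_nil, sdrop_zero]

lemma sapp_getElem_append (Wl u : List Bool) (t : Seq) (m : ℕ) (hm : m < Wl.length) :
    sapp (Wl ++ u) t m = Wl[m] := by
  rw [sapp_lt _ _ _ (by rw [List.length_append]; omega)]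
  exact List.getElem_append_left hm



end RefineAux

open RefineAux in
/-- **Finite families of clones can be refined to pairwise disjoint clones** whose union
generates a proper subalgebra. -/
theorem refine_clones_disjoint {C : Type} (hC : CantorStr C) (c : C)
    (hfree : IsFreeCantorOn hC ![c]) (k : ℕ) (X : Fin k → Set C)
    (hX : ∀ j, IsClone hC (X j)) :
    ∃ X' : Fin k → Set C, (∀ j, IsClone hC (X' j)) ∧ (∀ j, X' j ⊆ X j) ∧
      (∀ i j, i ≠ j → X' i ∩ X' j = ∅) ∧
      genCantorSubalgebra hC (⋃ j, X' j) ≠ Set.univ := by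
  classical
  obtain ⟨f, ⟨hf_hom, hf_c⟩, -⟩ := hfree FF FC ![(id : FF)]
  have hfc : f c = id := by simpa using hf_c 0
  have hgenuniv := gen_singleton_univ hC c hfree
  have hGood : ∀ z : C, f z ∈ Good := by
    intro z
    have hsub : genCantorSubalgebra hC {c} ⊆ f ⁻¹' Good :=
      gen_least hC (preimage_subalg hf_hom good_subalg)
        (by intro w hw; rcases hw with rfl
            show f w ∈ Good; rw [hfc]; exact id_mem_good)
    exact hsub (by rw [hgenuniv]; trivial)
  have hxe : ∀ j, (X j).Nonempty := fun j => (hX j).2.1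
  choose x hx using hxe
  have hNex : ∀ j, ∃ N, GoodSpec (f (x j)) N := fun j => hGood (x j)
  choose N hNs using hNex
  set V : Fin k → List Bool := fun j => List.replicate (N j) false with hVdef
  have hspec : ∀ j, ∃ u n, n ≤ N j ∧
      ∀ s, f (x j) (sapp (V j) s) = sapp u (sapp ((V j).drop n) s) :=
    fun j => hNs j (V j) List.length_replicate
  choose u n hn hu using hspec
  set P : Fin k → List Bool := fun j => u j ++ (V j).drop (n j) with hPdef
  obtain ⟨M, hPM⟩ : ∃ M, ∀ j, (P j).length ≤ M :=
    ⟨Finset.univ.sup (fun j => (P j).length), fun j =>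
      Finset.le_sup (f := fun j => (P j).length) (Finset.mem_univ j)⟩
  set mark : Fin k → List Bool := fun j => List.ofFn (fun i : Fin k => decide (i = j))
    with hmarkdef
  set rest : Fin k → List Bool := fun j =>
    List.replicate (M - (P j).length) false ++ mark j with hrestdef
  set W : Fin k → List Bool := fun j => P j ++ rest j with hWdef
  have hWlen : ∀ j, (W j).length = M + k := by
    intro j
    have := hPM j
    simp only [hWdef, hrestdef, hmarkdef, List.length_append, List.length_replicate,
      List.length_ofFn]
    omega
  set z : Fin k → C := fun j => aw hC (rest j) (aw hC (V j) (x j)) with hzdef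
  have hfz : ∀ j, f (z j) = fun s => sapp (W j) s := by
    intro j
    have h2 : aw FC (V j) (f (x j)) = fun s => sapp (P j) s := by
      rw [aw_F]; funext s
      rw [hu j s, hPdef]
      rw [sapp_append]
    calc f (z j) = aw FC (rest j) (f (aw hC (V j) (x j))) := hom_aw hf_hom _ _
      _ = aw FC (rest j) (aw FC (V j) (f (x j))) := by rw [hom_aw hf_hom]
      _ = fun s => sapp (W j) s := by
          rw [h2, aw_F]; funext s
          exact (sapp_append (P j) (rest j) s).symm
  set X' : Fin k → Set C := fun j => genCantorSubalgebra hC {z j} with hX'def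
  have hzX : ∀ j, z j ∈ X j := fun j => mem_aw (hX j).1 (mem_aw (hX j).1 (hx j) _) _
  have hsubX : ∀ j, X' j ⊆ X j := fun j =>
    gen_least hC (hX j).1 (Set.singleton_subset_iff.mpr (hzX j))
  have hXS : ∀ j, X' j ⊆ f ⁻¹' (SU {W j}) := fun j =>
    gen_least hC (preimage_subalg hf_hom (SU_subalg _))
      (by intro w hw; rcases hw with rfl
          show f (z j) ∈ SU {W j}
          rw [hfz j]; exact sapp_mem_SU rfl)
  have hkey : ∀ (i j : Fin k) (uu : List Bool) (t : Seq),
      sapp (W j ++ uu) t (M + (i : ℕ)) = decide (i = j) := by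
    intro i j uu t
    have h1 : M + (i : ℕ) < (W j).length := by rw [hWlen]; omega
    rw [sapp_getElem_append _ _ _ _ h1]
    have h2 : W j = (P j ++ List.replicate (M - (P j).length) false) ++ mark j := by
      rw [hWdef, hrestdef, List.append_assoc]
    have hA : (P j ++ List.replicate (M - (P j).length) false).length = M := by
      simp only [List.length_append, List.length_replicate]
      have := hPM j; omega
    have h3 : (W j)[M + (i : ℕ)]'h1 =
        (mark j)[(M + (i : ℕ)) - (P j ++ List.replicate (M - (P j).length) false).length]'
          (by simp only [hA]; simp only [hmarkdef, List.length_ofFn]; omega) := by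
      simp only [h2]
      rw [List.getElem_append_right (by rw [hA]; omega)]
    rw [h3]
    have h4 : (M + (i : ℕ)) - (P j ++ List.replicate (M - (P j).length) false).length
        = (i : ℕ) := by rw [hA]; omega
    simp only [hmarkdef]
    rw [List.getElem_ofFn]
    simp only [decide_eq_decide, Fin.ext_iff, hA]
    omega
  refine ⟨X', ?_, hsubX, ?_, ?_⟩
  · intro j
    refine ⟨gen_subalg hC _, ⟨z j, subset_gen hC _ rfl⟩, ?_,
      ⟨{z j}, Set.finite_singleton _, rfl⟩⟩
    intro hXuniv
    exact (hX j).2.2.1 (Set.eq_univ_of_univ_subset (hXuniv ▸ hsubX j))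
  · intro i j hij
    ext w
    simp only [Set.mem_inter_iff, Set.mem_empty_iff_false, iff_false, not_and]
    intro hwi hwj
    obtain ⟨W1, hW1, uu1, nn1, he1⟩ := hXS i hwi (fun _ => false)
    obtain ⟨W2, hW2, uu2, nn2, he2⟩ := hXS j hwj (fun _ => false)
    rw [Set.mem_singleton_iff] at hW1 hW2
    subst hW1; subst hW2
    have e1 := congrFun (he1.symm.trans he2) (M + (i : ℕ))
    rw [hkey i i, hkey i j] at e1
    have : i = j := by simpa using e1
    exact hij this
  · intro hU
    have hsub2 : genCantorSubalgebra hC (⋃ j, X' j) ⊆ f ⁻¹' (SU (Set.range W)) := by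
      apply gen_least hC (preimage_subalg hf_hom (SU_subalg _))
      intro w hw
      obtain ⟨j, hj⟩ := Set.mem_iUnion.mp hw
      exact SU_mono (Ws := {W j}) (Ws' := Set.range W)
        (Set.singleton_subset_iff.mpr (Set.mem_range_self j)) (hXS j hj)
    have hcmem : c ∈ genCantorSubalgebra hC (⋃ j, X' j) := by rw [hU]; trivial
    have hfcmem : f c ∈ SU (Set.range W) := hsub2 hcmem
    rw [hfc] at hfcmem
    obtain ⟨W', hW', uu, nn, he⟩ := hfcmem (fun _ => false)
    obtain ⟨j, rfl⟩ := hW'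
    have e1 := congrFun he (M + (j : ℕ))
    rw [hkey j j] at e1
    simp at e1
end

section
/- Cloning (used in the proofs of Propositions 5.4 and 5.5): let C be a Cantor algebra free on one generator and let Z be a clone of C. Then there exist two clones Z₁ and Z₂ of C with Z₁ ⊆ Z, Z₂ ⊆ Z, Z₁ ∩ Z₂ = ∅, and such that Z equals the subalgebra generated by Z₁ ∪ Z₂. -/
open CategoryTheory


namespace CloningProof

inductive T : Type where
  | leaf : List Bool → T
  | node : T → T → T

open T

def smash : T → T → T
  | .leaf u, .leaf v =>
      if u.dropLast ++ [false] = u ∧ v = u.dropLast ++ [true] then .leaf u.dropLast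
      else .node (.leaf u) (.leaf v)
  | a, b => .node a b

lemma smash_leaf_leaf (u v : List Bool) :
    smash (leaf u) (leaf v) =
      if u.dropLast ++ [false] = u ∧ v = u.dropLast ++ [true] then .leaf u.dropLast
      else .node (.leaf u) (.leaf v) := rfl

lemma smash_node_left (l r : T) (b : T) : smash (node l r) b = node (node l r) b := by
  cases b <;> rfl

lemma smash_node_right (a : T) (l r : T) : smash a (node l r) = node a (node l r) := by
  cases a <;> rfl

inductive Red : T → Prop where
  | leaf (w : List Bool) : Red (.leaf w)
  | node {l r : T} : Red l → Red r →
      (∀ w, l = .leaf (w ++ [false]) → r ≠ .leaf (w ++ [true])) → Red (.node l r)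

lemma red_node_left {l r : T} (h : Red (node l r)) : Red l := by cases h; assumption
lemma red_node_right {l r : T} (h : Red (node l r)) : Red r := by cases h; assumption
lemma red_node_nredex {l r : T} (h : Red (node l r)) :
    ∀ w, l = .leaf (w ++ [false]) → r ≠ .leaf (w ++ [true]) := by cases h; assumption

lemma smash_red {a b : T} (ha : Red a) (hb : Red b) : Red (smash a b) := by
  cases a with
  | leaf u =>
    cases b with
    | leaf v =>
      rw [smash_leaf_leaf]
      split
      · exact Red.leaf _
      · rename_i hcond
        refine Red.node ha hb ?_
        rintro w h1 h2
        apply hcond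
        injection h1 with h1; injection h2 with h2
        subst h1
        constructor
        · rw [List.dropLast_concat]
        · rw [List.dropLast_concat, h2]
    | node l r =>
      exact Red.node ha hb (by rintro w h1 h2; cases h2)
  | node l r =>
    cases b with
    | leaf v => exact Red.node ha hb (by rintro w h1 h2; cases h1)
    | node _ _ => exact Red.node ha hb (by rintro w h1 h2; cases h1)

lemma smash_eq_node {a b : T} (h : Red (node a b)) : smash a b = node a b := by
  cases a with
  | leaf u =>
    cases b with
    | leaf v =>
      rw [smash_leaf_leaf, if_neg]
      rintro ⟨h1, h2⟩
      exact red_node_nredex h u.dropLast (congrArg leaf h1.symm) (congrArg leaf h2)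
    | node _ _ => exact smash_node_right _ _ _
  | node _ _ => exact smash_node_left _ _ _

def unsmash : T → T × T
  | .leaf w => (.leaf (w ++ [false]), .leaf (w ++ [true]))
  | .node l r => (l, r)

lemma unsmash_red₁ {t : T} (h : Red t) : Red (unsmash t).1 := by
  cases t with
  | leaf w => exact Red.leaf _
  | node l r => exact red_node_left h

lemma unsmash_red₂ {t : T} (h : Red t) : Red (unsmash t).2 := by
  cases t with
  | leaf w => exact Red.leaf _
  | node l r => exact red_node_right h

lemma unsmash_smash (a b : T) (hab : Red (node a b) ∨ ∃ w, a = leaf (w ++ [false]) ∧ b = leaf (w ++ [true])) :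
    unsmash (smash a b) = (a, b) := by
  cases a with
  | leaf u =>
    cases b with
    | leaf v =>
      rw [smash_leaf_leaf]
      split
      · rename_i hcond
        show (leaf (u.dropLast ++ [false]), leaf (u.dropLast ++ [true])) = _
        rw [hcond.1, ← hcond.2]
      · rfl
    | node _ _ => rw [smash_node_right]; rfl
  | node _ _ => cases b <;> rfl

lemma smash_unsmash {t : T} (h : Red t) : smash (unsmash t).1 (unsmash t).2 = t := by
  cases t with
  | leaf w =>
    show smash (leaf (w ++ [false])) (leaf (w ++ [true])) = leaf w
    rw [smash_leaf_leaf, if_pos]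
    · rw [List.dropLast_concat]
    · constructor <;> rw [List.dropLast_concat]
  | node l r => exact smash_eq_node h

def E : Type := {t : T // Red t}

def muE : E × E ≃ E where
  toFun p := ⟨smash p.1.1 p.2.1, smash_red p.1.2 p.2.2⟩
  invFun t := (⟨(unsmash t.1).1, unsmash_red₁ t.2⟩, ⟨(unsmash t.1).2, unsmash_red₂ t.2⟩)
  left_inv := by
    rintro ⟨⟨a, ha⟩, ⟨b, hb⟩⟩
    have key : unsmash (smash a b) = (a, b) := by
      apply unsmash_smash
      by_cases hc : ∃ w, a = leaf (w ++ [false]) ∧ b = leaf (w ++ [true])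
      · exact Or.inr hc
      · exact Or.inl (Red.node ha hb (by push_neg at hc; exact hc))
    refine Prod.ext (Subtype.ext ?_) (Subtype.ext ?_) <;> simp [key]
  right_inv := by
    rintro ⟨t, ht⟩
    exact Subtype.ext (smash_unsmash ht)

def hE : CantorStr E := ⟨muE⟩

end CloningProof

namespace CloningProof
open T

section Interp

variable {X : Type} (hX : CantorStr X) (x : X)

def step (a : X) (b : Bool) : X := if b then (hX.mu.symm a).2 else (hX.mu.symm a).1

def wx (w : List Bool) : X := w.foldl (step hX) x

lemma wx_nil : wx hX x [] = x := rfl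

lemma wx_concat (w : List Bool) (b : Bool) :
    wx hX x (w ++ [b]) = step hX (wx hX x w) b := by
  unfold wx; rw [List.foldl_append]; rfl

lemma mu_wx (w : List Bool) :
    hX.mu (wx hX x (w ++ [false]), wx hX x (w ++ [true])) = wx hX x w := by
  rw [wx_concat, wx_concat]
  show hX.mu ((hX.mu.symm _).1, (hX.mu.symm _).2) = _
  exact hX.mu.apply_symm_apply _

def interpT : T → X
  | .leaf w => wx hX x w
  | .node l r => hX.mu (interpT l, interpT r)

def interpE (t : E) : X := interpT hX x t.1

lemma interp_smash (a b : T) : interpT hX x (smash a b) = hX.mu (interpT hX x a, interpT hX x b) := by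
  cases a with
  | leaf u =>
    cases b with
    | leaf v =>
      rw [smash_leaf_leaf]
      split
      · rename_i hcond
        obtain ⟨h1, h2⟩ := hcond
        show wx hX x u.dropLast = hX.mu (wx hX x u, wx hX x v)
        rw [h2, ← mu_wx hX x u.dropLast, h1]
      · rfl
    | node _ _ => rw [smash_node_right]; rfl
  | node _ _ => cases b <;> rfl

lemma interp_hom : IsCantorHom hE hX (interpE hX x) := by
  rintro ⟨a, ha⟩ ⟨b, hb⟩
  exact interp_smash hX x a b

lemma interp_leaf_nil : interpE hX x ⟨leaf [], Red.leaf _⟩ = x := rfl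

end Interp

/-- components of `mu.symm` commute with homomorphisms -/
lemma hom_symm {C X : Type} {hC : CantorStr C} {hX : CantorStr X} {f : C → X}
    (hf : IsCantorHom hC hX f) (z : C) :
    f ((hC.mu.symm z).1) = (hX.mu.symm (f z)).1 ∧
      f ((hC.mu.symm z).2) = (hX.mu.symm (f z)).2 := by
  have h1 : z = hC.mu (hC.mu.symm z) := (hC.mu.apply_symm_apply z).symm
  have h2 : f z = hX.mu (f (hC.mu.symm z).1, f (hC.mu.symm z).2) := by
    conv_lhs => rw [h1]
    rw [← hf]
  have h3 : hX.mu.symm (f z) = (f (hC.mu.symm z).1, f (hC.mu.symm z).2) := by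
    rw [h2, hX.mu.symm_apply_apply]
  rw [h3]
  exact ⟨rfl, rfl⟩

lemma muE_symm_leaf (w : List Bool) :
    hE.mu.symm ⟨leaf w, Red.leaf _⟩ =
      (⟨leaf (w ++ [false]), Red.leaf _⟩, ⟨leaf (w ++ [true]), Red.leaf _⟩) := rfl

lemma muE_node {l r : T} (h : Red (node l r)) :
    hE.mu (⟨l, red_node_left h⟩, ⟨r, red_node_right h⟩) = ⟨node l r, h⟩ :=
  Subtype.ext (smash_eq_node h)

/-- two homs out of E agreeing on the generator agree everywhere -/
lemma hom_ext_E {X : Type} {hX : CantorStr X} {f g : E → X}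
    (hf : IsCantorHom hE hX f) (hg : IsCantorHom hE hX g)
    (h0 : f ⟨leaf [], Red.leaf _⟩ = g ⟨leaf [], Red.leaf _⟩) : f = g := by
  have leafcase : ∀ w : List Bool, f ⟨leaf w, Red.leaf _⟩ = g ⟨leaf w, Red.leaf _⟩ := by
    intro w
    induction w using List.reverseRecOn with
    | nil => exact h0
    | append_singleton w b ih =>
      have hfst := (hom_symm hf ⟨leaf w, Red.leaf _⟩)
      have hgst := (hom_symm hg ⟨leaf w, Red.leaf _⟩)
      cases b
      · have e1 : (⟨leaf (w ++ [false]), Red.leaf _⟩ : E) = (hE.mu.symm ⟨leaf w, Red.leaf _⟩).1 := rfl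
        rw [e1, hfst.1, hgst.1, ih]
      · have e1 : (⟨leaf (w ++ [true]), Red.leaf _⟩ : E) = (hE.mu.symm ⟨leaf w, Red.leaf _⟩).2 := rfl
        rw [e1, hfst.2, hgst.2, ih]
  funext t
  obtain ⟨t, ht⟩ := t
  induction t with
  | leaf w => exact leafcase w
  | node l r ihl ihr =>
    rw [← muE_node ht]
    refine (hf _ _).trans ((hg _ _).trans ?_).symm
    rw [ihl (red_node_left ht), ihr (red_node_right ht)]

/-- E is free on `leaf []`. -/
lemma freeE : IsFreeCantorOn hE ![⟨leaf [], Red.leaf _⟩] := by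
  intro X hX xv
  refine ⟨interpE hX (xv 0), ⟨interp_hom hX (xv 0), ?_⟩, ?_⟩
  · intro i
    fin_cases i
    · exact interp_leaf_nil hX (xv 0)
  · rintro g ⟨hg, hg0⟩
    refine hom_ext_E hg (interp_hom hX (xv 0)) ?_
    have := hg0 0
    exact this.trans (interp_leaf_nil hX (xv 0)).symm

end CloningProof

namespace CloningProof
open T

section SubAlg

variable {C : Type} (hC : CantorStr C)

lemma mem_gen {A : Set C} {x : C} :
    x ∈ genCantorSubalgebra hC A ↔ ∀ S, IsCantorSubalgebra hC S → A ⊆ S → x ∈ S := by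
  simp only [genCantorSubalgebra, Set.mem_sInter, Set.mem_setOf_eq, and_imp]

lemma subset_gen (A : Set C) : A ⊆ genCantorSubalgebra hC A := by
  intro x hx
  rw [mem_gen]
  intro S _ hAS
  exact hAS hx

lemma gen_le {A S : Set C} (hS : IsCantorSubalgebra hC S) (h : A ⊆ S) :
    genCantorSubalgebra hC A ⊆ S := by
  intro x hx
  exact (mem_gen hC).mp hx S hS h

lemma gen_isSub (A : Set C) : IsCantorSubalgebra hC (genCantorSubalgebra hC A) := by
  constructor
  · intro x hx y hy
    rw [mem_gen] at *
    intro S hS hAS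
    exact hS.1 x (hx S hS hAS) y (hy S hS hAS)
  · intro x hx
    rw [mem_gen] at hx
    constructor
    · rw [mem_gen]
      intro S hS hAS
      exact (hS.2 x (hx S hS hAS)).1
    · rw [mem_gen]
      intro S hS hAS
      exact (hS.2 x (hx S hS hAS)).2

lemma gen_mono {A B : Set C} (h : A ⊆ B) :
    genCantorSubalgebra hC A ⊆ genCantorSubalgebra hC B :=
  gen_le hC (gen_isSub hC B) (h.trans (subset_gen hC B))

variable {X : Type} {hX : CantorStr X}

lemma preimage_sub {f : C → X} (hf : IsCantorHom hC hX f) {S : Set X}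
    (hS : IsCantorSubalgebra hX S) : IsCantorSubalgebra hC (f ⁻¹' S) := by
  constructor
  · intro x hx y hy
    show f _ ∈ S
    rw [hf]
    exact hS.1 _ hx _ hy
  · intro x hx
    constructor
    · show f _ ∈ S
      rw [(hom_symm hf x).1]
      exact (hS.2 _ hx).1
    · show f _ ∈ S
      rw [(hom_symm hf x).2]
      exact (hS.2 _ hx).2

/-- for a hom with a two-sided hom inverse, images of subalgebras are subalgebras -/
lemma image_sub {f : C → X} {g : X → C} (hg : IsCantorHom hX hC g)
    (hfg : Function.LeftInverse g f) (hgf : Function.RightInverse g f) {S : Set C}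
    (hS : IsCantorSubalgebra hC S) : IsCantorSubalgebra hX (f '' S) := by
  have himg : f '' S = g ⁻¹' S := by
    ext y
    constructor
    · rintro ⟨x, hx, rfl⟩
      simpa [hfg x] using hx
    · intro hy
      exact ⟨g y, hy, hgf y⟩
  rw [himg]
  exact preimage_sub hX hg hS

lemma image_gen {f : C → X} {g : X → C} (hf : IsCantorHom hC hX f) (hg : IsCantorHom hX hC g)
    (hfg : Function.LeftInverse g f) (hgf : Function.RightInverse g f) (A : Set C) :
    f '' genCantorSubalgebra hC A = genCantorSubalgebra hX (f '' A) := by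
  apply Set.Subset.antisymm
  · rw [Set.image_subset_iff]
    apply gen_le hC (preimage_sub hC hf (gen_isSub hX (f '' A)))
    intro a ha
    exact subset_gen hX _ ⟨a, ha, rfl⟩
  · apply gen_le hX (image_sub hC hg hfg hgf (gen_isSub hC A))
    exact Set.image_mono (f := f) (subset_gen hC A)

end SubAlg

section Words

/-- closure of a set of words under children and sibling merges -/
inductive cl (W : Set (List Bool)) : List Bool → Prop
  | mem {w : List Bool} : w ∈ W → cl W w
  | child {w : List Bool} (b : Bool) : cl W w → cl W (w ++ [b])
  | merge {w : List Bool} : cl W (w ++ [false]) → cl W (w ++ [true]) → cl W w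

def WClosed (S : Set (List Bool)) : Prop :=
  (∀ w ∈ S, ∀ b : Bool, w ++ [b] ∈ S) ∧
    (∀ w : List Bool, w ++ [false] ∈ S → w ++ [true] ∈ S → w ∈ S)

lemma cl_closed (W : Set (List Bool)) : WClosed {w | cl W w} := by
  constructor
  · intro w hw b
    exact cl.child b hw
  · intro w h0 h1
    exact cl.merge h0 h1

lemma cl_min {W S : Set (List Bool)} (hS : WClosed S) (hWS : W ⊆ S) :
    ∀ w, cl W w → w ∈ S := by
  intro w hw
  induction hw with
  | mem h => exact hWS h
  | child b _ ih => exact hS.1 _ ih b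
  | merge _ _ ih0 ih1 => exact hS.2 _ ih0 ih1

lemma cl_mono {W W' : Set (List Bool)} (h : W ⊆ W') : ∀ w, cl W w → cl W' w := by
  intro w hw
  induction hw with
  | mem hm => exact cl.mem (h hm)
  | child b _ ih => exact cl.child b ih
  | merge _ _ ih0 ih1 => exact cl.merge ih0 ih1

lemma concat_inj' {l₁ l₂ : List Bool} {a b : Bool} (h : l₁ ++ [a] = l₂ ++ [b]) :
    l₁ = l₂ ∧ a = b := by
  have := List.concat_inj.mp (by simpa using h)
  simpa using this

def up (u : List Bool) : Set (List Bool) := {w | u <+: w}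

lemma up_closed (u : List Bool) : WClosed (up u) := by
  constructor
  · intro w hw b
    exact hw.trans (List.prefix_append w [b])
  · intro w h0 h1
    rcases List.prefix_concat_iff.mp h0 with h | h
    · rcases List.prefix_concat_iff.mp h1 with h' | h'
      · exact absurd (concat_inj' (h.symm.trans h')).2 Bool.false_ne_true
      · exact h'
    · exact h

lemma cl_singleton (u : List Bool) : {w | cl {u} w} = up u := by
  apply Set.Subset.antisymm
  · intro w hw
    exact cl_min (up_closed u) (by intro a ha; simp only [Set.mem_singleton_iff] at ha; subst ha; exact List.prefix_refl a) w hw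
  · rintro w ⟨s, rfl⟩
    induction s using List.reverseRecOn with
    | nil =>
      show cl {u} (u ++ [])
      simpa using cl.mem (W := {u}) rfl
    | append_singleton s b ih =>
      rw [← List.append_assoc]
      exact cl.child b ih

lemma exists_min_prefix (S : Set (List Bool)) :
    ∀ w ∈ S, ∃ v, v <+: w ∧ v ∈ S ∧ ∀ u, u <+: v → u ≠ v → u ∉ S := by
  suffices h : ∀ n (w : List Bool), w.length = n → w ∈ S →
      ∃ v, v <+: w ∧ v ∈ S ∧ ∀ u, u <+: v → u ≠ v → u ∉ S by
    intro w hw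
    exact h w.length w rfl hw
  intro n
  induction n using Nat.strong_induction_on with
  | _ n ih =>
    intro w hlen hw
    subst hlen
    by_cases hex : ∃ u, u <+: w ∧ u ≠ w ∧ u ∈ S
    · obtain ⟨u, hu, hne, huS⟩ := hex
      have hlt : u.length < w.length := by
        rcases lt_or_eq_of_le hu.length_le with h | h
        · exact h
        · exact absurd (hu.eq_of_length h) hne
      obtain ⟨v, hv1, hv2, hv3⟩ := ih u.length hlt u rfl huS
      exact ⟨v, hv1.trans hu, hv2, hv3⟩
    · push_neg at hex
      exact ⟨w, List.prefix_refl w, hw, fun u h1 h2 => hex u h1 h2⟩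

lemma prefix_proper_step {x v : List Bool} (h : x <+: v) (hne : x ≠ v) :
    ∃ b, x ++ [b] <+: v := by
  obtain ⟨s, rfl⟩ := h
  cases s with
  | nil => simp at hne
  | cons b s' =>
    refine ⟨b, s', ?_⟩
    simp

/-- the key invariant separating the two clones -/
def Tset (v : List Bool) : Set (List Bool) :=
  {x | ¬ (v ++ [true] <+: x) ∧ ¬ (x <+: v)}

lemma Tset_closed (v : List Bool) : WClosed (Tset v) := by
  constructor
  · rintro x ⟨hx1, hx2⟩ b
    constructor
    · intro h
      rcases List.prefix_concat_iff.mp h with h | h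
      · obtain ⟨h1, _⟩ := concat_inj' h
        exact hx2 (h1 ▸ List.prefix_refl v)
      · exact hx1 h
    · intro h
      exact hx2 ((List.prefix_append x [b]).trans h)
  · rintro x ⟨h01, h02⟩ ⟨h11, h12⟩
    constructor
    · intro h
      exact h01 (h.trans (List.prefix_append x [false]))
    · intro h
      by_cases hxv : x = v
      · subst hxv
        exact h11 (List.prefix_refl _)
      · obtain ⟨b, hb⟩ := prefix_proper_step h hxv
        cases b
        · exact h02 hb
        · exact h12 hb

end Words

end CloningProof

namespace CloningProof
open T

def leafE (w : List Bool) : E := ⟨leaf w, Red.leaf w⟩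

def labels : T → List (List Bool)
  | .leaf w => [w]
  | .node l r => labels l ++ labels r

lemma labels_ne_nil : ∀ t : T, labels t ≠ []
  | .leaf w => by simp [labels]
  | .node l r => by
      simp only [labels, ne_eq]
      intro h
      exact labels_ne_nil l (List.append_eq_nil_iff.mp h).1

/-- the set of reduced trees all of whose labels lie in `S` -/
def D (S : Set (List Bool)) : Set E := {t | ∀ w ∈ labels t.1, w ∈ S}

lemma leafE_mem_D {S : Set (List Bool)} {w : List Bool} : leafE w ∈ D S ↔ w ∈ S := by
  show (∀ x ∈ labels (leaf w), x ∈ S) ↔ w ∈ S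
  simp [labels]

lemma D_mono {S S' : Set (List Bool)} (h : S ⊆ S') : D S ⊆ D S' := by
  intro t ht w hw
  exact h (ht w hw)

lemma smash_sibling (w : List Bool) :
    smash (leaf (w ++ [false])) (leaf (w ++ [true])) = leaf w := by
  rw [smash_leaf_leaf, if_pos]
  · rw [List.dropLast_concat]
  · constructor <;> rw [List.dropLast_concat]

lemma muE_sibling (w : List Bool) :
    hE.mu (leafE (w ++ [false]), leafE (w ++ [true])) = leafE w :=
  Subtype.ext (smash_sibling w)

lemma cl_of_prefix {u w : List Bool} (h : u <+: w) : cl {u} w := by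
  have h2 : w ∈ up u := h
  rw [← cl_singleton] at h2
  exact h2

lemma prefix_of_cl_singleton {u w : List Bool} (h : cl {u} w) : u <+: w := by
  have h2 : w ∈ {x | cl {u} x} := h
  rw [cl_singleton] at h2
  exact h2

lemma mem_labels_smash {a b : T} {w : List Bool} (h : w ∈ labels (smash a b)) :
    w ∈ labels a ∨ w ∈ labels b ∨ (w ++ [false] ∈ labels a ∧ w ++ [true] ∈ labels b) := by
  cases a with
  | leaf u =>
    cases b with
    | leaf v =>
      rw [smash_leaf_leaf] at h
      split at h
      · rename_i hcond
        simp only [labels, List.mem_singleton] at h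
        subst h
        refine Or.inr (Or.inr ?_)
        simp only [labels, List.mem_singleton]
        exact ⟨hcond.1, hcond.2.symm⟩
      · simp only [labels, List.mem_append] at h
        rcases h with h | h
        · exact Or.inl h
        · exact Or.inr (Or.inl h)
    | node _ _ =>
      rw [smash_node_right] at h
      simp only [labels, List.mem_append] at h ⊢
      tauto
  | node _ _ =>
    rw [smash_node_left] at h
    simp only [labels, List.mem_append] at h ⊢
    tauto

lemma mem_labels_unsmash₁ {t : T} {w : List Bool} (h : w ∈ labels (unsmash t).1) :
    w ∈ labels t ∨ ∃ u ∈ labels t, w = u ++ [false] := by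
  cases t with
  | leaf u =>
    simp only [unsmash, labels, List.mem_singleton] at h
    exact Or.inr ⟨u, by simp [labels], h⟩
  | node l r =>
    simp only [unsmash, labels, List.mem_append] at *
    exact Or.inl (Or.inl h)

lemma mem_labels_unsmash₂ {t : T} {w : List Bool} (h : w ∈ labels (unsmash t).2) :
    w ∈ labels t ∨ ∃ u ∈ labels t, w = u ++ [true] := by
  cases t with
  | leaf u =>
    simp only [unsmash, labels, List.mem_singleton] at h
    exact Or.inr ⟨u, by simp [labels], h⟩
  | node l r =>
    simp only [unsmash, labels, List.mem_append] at *
    exact Or.inl (Or.inr h)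

lemma D_sub {S : Set (List Bool)} (hS : WClosed S) : IsCantorSubalgebra hE (D S) := by
  constructor
  · rintro ⟨a, ha⟩ hA ⟨b, hb⟩ hB w hw
    rcases mem_labels_smash hw with h | h | ⟨h1, h2⟩
    · exact hA w h
    · exact hB w h
    · exact hS.2 w (hA _ h1) (hB _ h2)
  · rintro ⟨t, ht⟩ hT
    constructor
    · intro w hw
      rcases mem_labels_unsmash₁ hw with h | ⟨u, hu, rfl⟩
      · exact hT w h
      · exact hS.1 u (hT u hu) false
    · intro w hw
      rcases mem_labels_unsmash₂ hw with h | ⟨u, hu, rfl⟩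
      · exact hT w h
      · exact hS.1 u (hT u hu) true

lemma sub_labels {A : Set E} (hA : IsCantorSubalgebra hE A) :
    ∀ (t : T) (ht : Red t), (⟨t, ht⟩ : E) ∈ A → ∀ w ∈ labels t, leafE w ∈ A := by
  intro t
  induction t with
  | leaf u =>
    intro ht hmem w hw
    simp only [labels, List.mem_singleton] at hw
    subst hw
    exact hmem
  | node l r ihl ihr =>
    intro ht hmem w hw
    have h1 : (hE.mu.symm ⟨node l r, ht⟩).1 = ⟨l, red_node_left ht⟩ := rfl
    have h2 : (hE.mu.symm ⟨node l r, ht⟩).2 = ⟨r, red_node_right ht⟩ := rfl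
    have hl : (⟨l, red_node_left ht⟩ : E) ∈ A := h1 ▸ (hA.2 _ hmem).1
    have hr : (⟨r, red_node_right ht⟩ : E) ∈ A := h2 ▸ (hA.2 _ hmem).2
    simp only [labels, List.mem_append] at hw
    rcases hw with hw | hw
    · exact ihl (red_node_left ht) hl w hw
    · exact ihr (red_node_right ht) hr w hw

lemma labels_sub {A : Set E} (hA : IsCantorSubalgebra hE A) :
    ∀ (t : T) (ht : Red t), (∀ w ∈ labels t, leafE w ∈ A) → (⟨t, ht⟩ : E) ∈ A := by
  intro t
  induction t with
  | leaf u =>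
    intro ht h
    exact h u (by simp [labels])
  | node l r ihl ihr =>
    intro ht h
    have hl : (⟨l, red_node_left ht⟩ : E) ∈ A :=
      ihl _ (fun w hw => h w (by simp only [labels, List.mem_append]; exact Or.inl hw))
    have hr : (⟨r, red_node_right ht⟩ : E) ∈ A :=
      ihr _ (fun w hw => h w (by simp only [labels, List.mem_append]; exact Or.inr hw))
    have := hA.1 _ hl _ hr
    rwa [muE_node ht] at this

lemma cl_leafE_mem_gen {W : Set (List Bool)} :
    ∀ u, cl W u → leafE u ∈ genCantorSubalgebra hE (leafE '' W) := by
  intro u hu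
  induction hu with
  | mem hm => exact subset_gen hE _ ⟨_, hm, rfl⟩
  | @child w b _ ih =>
    cases b
    · have h1 : leafE (w ++ [false]) = (hE.mu.symm (leafE w)).1 := rfl
      rw [h1]
      exact ((gen_isSub hE _).2 _ ih).1
    · have h1 : leafE (w ++ [true]) = (hE.mu.symm (leafE w)).2 := rfl
      rw [h1]
      exact ((gen_isSub hE _).2 _ ih).2
  | merge _ _ ih0 ih1 =>
    rw [← muE_sibling]
    exact (gen_isSub hE _).1 _ ih0 _ ih1

lemma gen_leafE_eq_D (W : Set (List Bool)) :
    genCantorSubalgebra hE (leafE '' W) = D {w | cl W w} := by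
  apply Set.Subset.antisymm
  · apply gen_le hE (D_sub (cl_closed W))
    rintro t ⟨w, hw, rfl⟩
    exact leafE_mem_D.mpr (cl.mem hw)
  · rintro ⟨t, ht⟩ htD
    exact labels_sub (gen_isSub hE _) t ht (fun w hw => cl_leafE_mem_gen w (htD w hw))

/-- The cloning theorem for the concrete model E. -/
lemma cloneE (Z' : Set E) (hZ' : IsClone hE Z') :
    ∃ W₁ W₂ : Set (List Bool), W₁.Finite ∧ W₂.Finite ∧
      (genCantorSubalgebra hE (leafE '' W₁)) ⊆ Z' ∧
      (genCantorSubalgebra hE (leafE '' W₂)) ⊆ Z' ∧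
      (genCantorSubalgebra hE (leafE '' W₁)).Nonempty ∧
      (genCantorSubalgebra hE (leafE '' W₂)).Nonempty ∧
      (genCantorSubalgebra hE (leafE '' W₁)) ∩ (genCantorSubalgebra hE (leafE '' W₂)) = ∅ ∧
      genCantorSubalgebra hE
        ((genCantorSubalgebra hE (leafE '' W₁)) ∪ (genCantorSubalgebra hE (leafE '' W₂))) = Z' := by
  obtain ⟨hsub, hne, hproper, F, hFfin, hgen⟩ := hZ'
  classical
  set L : Set (List Bool) := {w | leafE w ∈ Z'} with hL
  set W : Set (List Bool) := ⋃ t ∈ F, {w | w ∈ labels (t : E).1} with hW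
  have hWfin : W.Finite := hFfin.biUnion (fun t _ => List.finite_toSet _)
  have hFZ : F ⊆ Z' := hgen ▸ subset_gen hE F
  have hWL : W ⊆ L := by
    intro w hw
    simp only [hW, Set.mem_iUnion, Set.mem_setOf_eq] at hw
    obtain ⟨t, htF, hwt⟩ := hw
    exact sub_labels hsub t.1 t.2 (hFZ htF) w hwt
  have hLclosed : WClosed L := by
    constructor
    · intro w hwL b
      cases b
      · have h1 : leafE (w ++ [false]) = (hE.mu.symm (leafE w)).1 := rfl
        show leafE (w ++ [false]) ∈ Z'
        rw [h1]
        exact (hsub.2 _ hwL).1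
      · have h1 : leafE (w ++ [true]) = (hE.mu.symm (leafE w)).2 := rfl
        show leafE (w ++ [true]) ∈ Z'
        rw [h1]
        exact (hsub.2 _ hwL).2
    · intro w h0 h1
      show leafE w ∈ Z'
      rw [← muE_sibling]
      exact hsub.1 _ h0 _ h1
  have hZD : Z' = D L := by
    apply Set.Subset.antisymm
    · rintro ⟨t, ht⟩ htZ w hw
      exact sub_labels hsub t ht htZ w hw
    · rintro ⟨t, ht⟩ htD
      exact labels_sub hsub t ht (fun w hw => htD w hw)
  have hLW : L = {w | cl W w} := by
    apply Set.Subset.antisymm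
    · intro w hwL
      have hFD : F ⊆ D {w | cl W w} := by
        intro t htF u hu
        exact cl.mem (by
          simp only [hW, Set.mem_iUnion, Set.mem_setOf_eq]
          exact ⟨t, htF, hu⟩)
      have : Z' ⊆ D {w | cl W w} := by
        rw [hgen]
        exact gen_le hE (D_sub (cl_closed W)) hFD
      exact leafE_mem_D.mp (this hwL)
    · intro w hw
      exact cl_min hLclosed hWL w hw
  -- get an element of L and a minimal prefix v
  obtain ⟨t0, ht0⟩ := hne
  obtain ⟨w0, hw0⟩ := List.exists_mem_of_ne_nil _ (labels_ne_nil t0.1)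
  have hw0L : w0 ∈ L := sub_labels hsub t0.1 t0.2 ht0 w0 hw0
  obtain ⟨v, hvw, hvL, hvmin⟩ := exists_min_prefix L w0 hw0L
  set W₁ : Set (List Bool) := {u ∈ W | ¬ v <+: u} ∪ {v ++ [false]} with hW₁
  set W₂ : Set (List Bool) := {v ++ [true]} with hW₂
  have hW₁fin : W₁.Finite := (hWfin.subset (Set.sep_subset _ _)).union (Set.finite_singleton _)
  have hW₂fin : W₂.Finite := Set.finite_singleton _
  have hv0L : v ++ [false] ∈ L := hLclosed.1 v hvL false
  have hv1L : v ++ [true] ∈ L := hLclosed.1 v hvL true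
  have hW₁L : W₁ ⊆ L := by
    rintro u (⟨huW, -⟩ | rfl)
    · exact hWL huW
    · exact hv0L
  have hW₂L : W₂ ⊆ L := by
    rintro u rfl
    exact hv1L
  set Z₁ := genCantorSubalgebra hE (leafE '' W₁) with hZ₁
  set Z₂ := genCantorSubalgebra hE (leafE '' W₂) with hZ₂
  have hZ₁D : Z₁ = D {w | cl W₁ w} := gen_leafE_eq_D W₁
  have hZ₂D : Z₂ = D {w | cl W₂ w} := gen_leafE_eq_D W₂
  have hZ₁Z' : Z₁ ⊆ Z' := by
    rw [hZ₁D, hZD]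
    exact D_mono (fun w hw => hLW ▸ (cl_min (hLW ▸ hLclosed) hW₁L w hw))
  have hZ₂Z' : Z₂ ⊆ Z' := by
    rw [hZ₂D, hZD]
    exact D_mono (fun w hw => hLW ▸ (cl_min (hLW ▸ hLclosed) hW₂L w hw))
  have hW₁T : W₁ ⊆ Tset v := by
    rintro u (⟨huW, huv⟩ | rfl)
    · constructor
      · intro h
        exact huv ((List.prefix_append v [true]).trans h)
      · intro h
        by_cases hne' : u = v
        · exact huv (hne' ▸ List.prefix_refl u)
        · exact hvmin u h hne' (hWL huW)
    · constructor
      · intro h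
        have := h.eq_of_length (by simp)
        exact absurd (concat_inj' this).2 (by decide : (true : Bool) ≠ false)
      · intro h
        have := h.length_le
        simp at this
  have hclW₁T : ∀ w, cl W₁ w → w ∈ Tset v := cl_min (Tset_closed v) hW₁T
  have hdisj : Z₁ ∩ Z₂ = ∅ := by
    rw [Set.eq_empty_iff_forall_notMem]
    rintro t ⟨h1, h2⟩
    rw [hZ₁D] at h1
    rw [hZ₂D] at h2
    obtain ⟨u0, hu0⟩ := List.exists_mem_of_ne_nil _ (labels_ne_nil t.1)
    have hT : u0 ∈ Tset v := hclW₁T u0 (h1 u0 hu0)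
    have h3 : cl {v ++ [true]} u0 := h2 u0 hu0
    exact hT.1 (prefix_of_cl_singleton h3)
  refine ⟨W₁, W₂, hW₁fin, hW₂fin, hZ₁Z', hZ₂Z', ?_, ?_, hdisj, ?_⟩
  · exact ⟨leafE (v ++ [false]), subset_gen hE _ ⟨_, Or.inr rfl, rfl⟩⟩
  · exact ⟨leafE (v ++ [true]), subset_gen hE _ ⟨_, rfl, rfl⟩⟩
  · apply Set.Subset.antisymm
    · exact gen_le hE hsub (Set.union_subset hZ₁Z' hZ₂Z')
    · set G := genCantorSubalgebra hE (Z₁ ∪ Z₂) with hG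
      have hZ₁G : Z₁ ⊆ G := (Set.subset_union_left).trans (subset_gen hE _)
      have hZ₂G : Z₂ ⊆ G := (Set.subset_union_right).trans (subset_gen hE _)
      have hGsub : IsCantorSubalgebra hE G := gen_isSub hE _
      have key : ∀ u, cl W u → leafE u ∈ G := by
        intro u hu
        induction hu with
        | @mem u' hm =>
          by_cases hvu : v <+: u'
          · obtain ⟨s, rfl⟩ := hvu
            cases s with
            | nil =>
              rw [List.append_nil]
              rw [← muE_sibling v]
              refine hGsub.1 _ (hZ₁G ?_) _ (hZ₂G ?_)
              · exact subset_gen hE _ ⟨_, Or.inr rfl, rfl⟩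
              · exact subset_gen hE _ ⟨_, rfl, rfl⟩
            | cons b s' =>
              have heq : v ++ b :: s' = (v ++ [b]) ++ s' := by simp
              cases b
              · apply hZ₁G
                rw [hZ₁D]
                intro w hw
                simp only [leafE, labels, List.mem_singleton] at hw
                subst hw
                exact cl_mono (show {v ++ [false]} ⊆ W₁ from by rintro x rfl; exact Or.inr rfl)
                  _ (cl_of_prefix ⟨s', heq.symm⟩)
              · apply hZ₂G
                rw [hZ₂D]
                intro w hw
                simp only [leafE, labels, List.mem_singleton] at hw
                subst hw
                exact cl_mono (show {v ++ [true]} ⊆ W₂ from by rintro x rfl; rfl)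
                  _ (cl_of_prefix ⟨s', heq.symm⟩)
          · apply hZ₁G
            exact subset_gen hE _ ⟨_, Or.inl ⟨hm, hvu⟩, rfl⟩
        | @child w b _ ih =>
          cases b
          · have h1 : leafE (w ++ [false]) = (hE.mu.symm (leafE w)).1 := rfl
            rw [h1]
            exact (hGsub.2 _ ih).1
          · have h1 : leafE (w ++ [true]) = (hE.mu.symm (leafE w)).2 := rfl
            rw [h1]
            exact (hGsub.2 _ ih).2
        | merge _ _ ih0 ih1 =>
          rw [← muE_sibling]
          exact hGsub.1 _ ih0 _ ih1
      rw [hZD]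
      rintro ⟨t, ht⟩ htD
      refine labels_sub hGsub t ht (fun w hw => key w ?_)
      have := htD w hw
      rw [hLW] at this
      exact this

end CloningProof

namespace CloningProof

lemma id_hom {C : Type} (hC : CantorStr C) : IsCantorHom hC hC id := fun _ _ => rfl

lemma comp_hom {A B D : Type} {hA : CantorStr A} {hB : CantorStr B} {hD : CantorStr D}
    {p : A → B} {q : B → D} (hp : IsCantorHom hA hB p) (hq : IsCantorHom hB hD q) :
    IsCantorHom hA hD (q ∘ p) := by
  intro x y
  simp only [Function.comp_apply]
  rw [hp, hq]

end CloningProof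


open CloningProof

/-- **Cloning**: every clone `Z` of a Cantor algebra free on one generator contains two
disjoint clones `Z₁, Z₂` such that `Z` is the subalgebra generated by `Z₁ ∪ Z₂`. -/
theorem cloning {C : Type} (hC : CantorStr C) (c : C) (hfree : IsFreeCantorOn hC ![c])
    (Z : Set C) (hZ : IsClone hC Z) :
    ∃ Z₁ Z₂ : Set C, IsClone hC Z₁ ∧ IsClone hC Z₂ ∧ Z₁ ⊆ Z ∧ Z₂ ⊆ Z ∧
      Z₁ ∩ Z₂ = ∅ ∧ genCantorSubalgebra hC (Z₁ ∪ Z₂) = Z := by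
  classical
  obtain ⟨f, ⟨hfhom, hfc⟩, funiq⟩ := hfree E hE ![leafE []]
  have hfc0 : f c = leafE [] := by simpa using hfc 0
  set g : E → C := interpE hC c with hgdef
  have hghom : IsCantorHom hE hC g := interp_hom hC c
  have hgc : g (leafE []) = c := rfl
  have hgf : ∀ x, g (f x) = x := by
    obtain ⟨h, ⟨hh, hhc⟩, huniq⟩ := hfree C hC ![c]
    have e1 : g ∘ f = h := by
      apply huniq
      refine ⟨comp_hom hfhom hghom, ?_⟩
      intro i
      fin_cases i
      show g (f c) = c
      rw [hfc0, hgc]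
    have e2 : (id : C → C) = h := by
      apply huniq
      exact ⟨id_hom hC, fun i => rfl⟩
    intro x
    have := congrFun (e1.trans e2.symm) x
    simpa using this
  have hfg : ∀ t, f (g t) = t := by
    have e1 : f ∘ g = id := by
      apply hom_ext_E (comp_hom hghom hfhom) (id_hom hE)
      show f (g (leafE [])) = leafE []
      rw [hgc, hfc0]
    intro t
    simpa using congrFun e1 t
  have himgC : ∀ A : Set C, g '' (f '' A) = A := by
    intro A
    rw [← Set.image_comp]
    ext x
    constructor
    · rintro ⟨a, ha, rfl⟩
      simpa [hgf a] using ha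
    · intro hx
      exact ⟨x, hx, hgf x⟩
  have hginj : Function.Injective g := by
    intro a b hab
    have := congrArg f hab
    rwa [hfg, hfg] at this
  obtain ⟨hsub, hne, hproper, F, hFfin, hgenZ⟩ := hZ
  have hZ'sub : IsCantorSubalgebra hE (f '' Z) := image_sub hC hghom hgf hfg hsub
  have hZ'ne : (f '' Z).Nonempty := hne.image f
  have hZ'proper : f '' Z ≠ Set.univ := by
    intro h
    apply hproper
    have h2 : g '' (f '' Z) = g '' Set.univ := by rw [h]
    rw [himgC] at h2
    rw [h2]
    apply Set.eq_univ_of_forall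
    intro x
    exact ⟨f x, trivial, hgf x⟩
  have hZ'gen : f '' Z = genCantorSubalgebra hE (f '' F) := by
    rw [hgenZ, image_gen hC hfhom hghom hgf hfg]
  have hZ'clone : IsClone hE (f '' Z) :=
    ⟨hZ'sub, hZ'ne, hZ'proper, f '' F, hFfin.image f, hZ'gen⟩
  obtain ⟨W₁, W₂, hW₁fin, hW₂fin, hsub₁, hsub₂, hne₁, hne₂, hdisj', hgen'⟩ :=
    cloneE (f '' Z) hZ'clone
  set Z₁' := genCantorSubalgebra hE (leafE '' W₁) with hZ₁'def
  set Z₂' := genCantorSubalgebra hE (leafE '' W₂) with hZ₂'def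
  have hZ₁Z : g '' Z₁' ⊆ Z := by
    have := Set.image_mono (f := g) hsub₁
    rwa [himgC] at this
  have hZ₂Z : g '' Z₂' ⊆ Z := by
    have := Set.image_mono (f := g) hsub₂
    rwa [himgC] at this
  have hZproper : Z ≠ Set.univ := hproper
  refine ⟨g '' Z₁', g '' Z₂', ?_, ?_, hZ₁Z, hZ₂Z, ?_, ?_⟩
  · refine ⟨image_sub hE hfhom hfg hgf (gen_isSub hE _), hne₁.image g, ?_, ?_⟩
    · intro h
      exact hZproper (Set.eq_univ_of_univ_subset (h ▸ hZ₁Z))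
    · exact ⟨g '' (leafE '' W₁), (hW₁fin.image _).image _,
        (image_gen hE hghom hfhom hfg hgf (leafE '' W₁)).symm ▸ rfl⟩
  · refine ⟨image_sub hE hfhom hfg hgf (gen_isSub hE _), hne₂.image g, ?_, ?_⟩
    · intro h
      exact hZproper (Set.eq_univ_of_univ_subset (h ▸ hZ₂Z))
    · exact ⟨g '' (leafE '' W₂), (hW₂fin.image _).image _,
        (image_gen hE hghom hfhom hfg hgf (leafE '' W₂)).symm ▸ rfl⟩
  · rw [← Set.image_inter hginj, hdisj', Set.image_empty]
  · rw [← Set.image_union, ← image_gen hE hghom hfhom hfg hgf, hgen', himgC]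
end
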